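/- Let A and B be hyponormal bounded operators on a complex Hilbert space such that BA* = A*B. Then for every positive integer k and all x, ‖(AB)*(AB)^k x‖ ≤ ‖(AB)^{k+1} x‖; that is, AB is k-quasihyponormal. -/

import Mathlib

open ContinuousLinearMap
open scoped InnerProductSpace

variable {H : Type*} [NormedAddCommGroup H] [InnerProductSpace ℂ H] [CompleteSpace H]

/-- A, B hyponormal, BA* = A*B ⟹ AB is k-quasihyponormal for every positive integer k. -/
theorem stmt5 (A B : H →L[ℂ] H)
    (hA : ∀ x : H, ‖adjoint A x‖ ≤ ‖A x‖)
    (hB : ∀ x : H, ‖adjoint B x‖ ≤ ‖B x‖)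
    (hcomm : B * adjoint A = adjoint A * B) :
    ∀ (k : ℕ), 0 < k → ∀ x : H,
      ‖(adjoint (A * B) * (A * B) ^ k) x‖ ≤ ‖((A * B) ^ (k + 1)) x‖ := by
  have hT : ∀ y : H, ‖adjoint (A * B) y‖ ≤ ‖(A * B) y‖ := by
    intro y
    have hadj : adjoint (A * B) = adjoint B * adjoint A := by
      rw [show A * B = A.comp B from rfl, adjoint_comp]; rfl
    have hcy : B (adjoint A y) = adjoint A (B y) := by
      have := congrArg (fun T : H →L[ℂ] H => T y) hcomm
      simpa [mul_apply] using this
    calc ‖adjoint (A * B) y‖ = ‖adjoint B (adjoint A y)‖ := by rw [hadj]; rfl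
      _ ≤ ‖B (adjoint A y)‖ := hB _
      _ = ‖adjoint A (B y)‖ := by rw [hcy]
      _ ≤ ‖A (B y)‖ := hA _
      _ = ‖(A * B) y‖ := rfl
  intro k _ x
  have : ((A * B) ^ (k + 1)) x = (A * B) (((A * B) ^ k) x) := by
    rw [pow_succ']; rfl
  rw [ContinuousLinearMap.mul_apply, this]
  exact hT _
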